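/- If c : ℝ → g is differentiable with |c(0)| = 1 and the components ψ_j satisfy ψ_j' = Σ_{k,i} c_{ij}^k ψ_i ψ_k where the structure constants satisfy c_{ij}^k = -c_{ji}^k (skew-symmetry in the lower indices), and u(t) = Σ_{i=1}^r ψ_i(t) e_i, then |u(t)| = 1 for all t. -/

import Mathlib

open Real Finset

/-- Conservation law `|u(t)| ≡ 1` for the normal geodesic control equations. -/
theorem control_norm_const {n r : ℕ} (hr : r ≤ n)
    (c : Fin n → Fin n → Fin n → ℝ)
    (hskew : ∀ i j k, c i j k = - c j i k)
    (ψ : Fin n → ℝ → ℝ)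
    (hode : ∀ j : Fin n, ∀ t : ℝ, HasDerivAt (ψ j)
      (∑ k : Fin n, ∑ i : Fin n,
        if (i : ℕ) < r then c i j k * ψ i t * ψ k t else 0) t)
    (u : ℝ → EuclideanSpace ℝ (Fin n))
    (hu : ∀ t, ∀ i : Fin n, u t i = if (i : ℕ) < r then ψ i t else 0)
    (hnorm0 : ‖u 0‖ = 1) :
    ∀ t : ℝ, ‖u t‖ = 1 := by
  set g : ℝ → ℝ := fun t => ∑ i : Fin n, (if (i : ℕ) < r then ψ i t else 0) ^ 2 with hg
  -- derivative of g
  have hderiv : ∀ t : ℝ, HasDerivAt g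
      (∑ j : Fin n, (if (j : ℕ) < r then
        2 * ψ j t * (∑ k : Fin n, ∑ i : Fin n,
          if (i : ℕ) < r then c i j k * ψ i t * ψ k t else 0) else 0)) t := by
    intro t
    apply HasDerivAt.fun_sum
    intro j _
    by_cases hj : (j : ℕ) < r
    · simp only [hj, if_true]
      have := ((hode j t).fun_pow 2)
      simpa [mul_comm, mul_assoc, mul_left_comm] using this
    · simp only [hj, if_false]
      simpa using (hasDerivAt_const t (0:ℝ))
  -- the derivative vanishes
  have hzero : ∀ t : ℝ, (∑ j : Fin n, (if (j : ℕ) < r then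
        2 * ψ j t * (∑ k : Fin n, ∑ i : Fin n,
          if (i : ℕ) < r then c i j k * ψ i t * ψ k t else 0) else 0)) = 0 := by
    intro t
    have h1 : ∀ j : Fin n, (if (j : ℕ) < r then
        2 * ψ j t * (∑ k : Fin n, ∑ i : Fin n,
          if (i : ℕ) < r then c i j k * ψ i t * ψ k t else 0) else 0)
        = ∑ i : Fin n, ∑ k : Fin n,
          (if (j : ℕ) < r ∧ (i : ℕ) < r then
            2 * c i j k * ψ i t * ψ j t * ψ k t else 0) := by
      intro j
      by_cases hj : (j : ℕ) < r
      · simp only [hj, if_true, true_and]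
        rw [Finset.mul_sum, Finset.sum_comm]
        refine Finset.sum_congr rfl fun i _ => ?_
        rw [Finset.mul_sum]
        refine Finset.sum_congr rfl fun k _ => ?_
        split_ifs with h
        · ring
        · ring
      · simp [hj]
    simp only [h1]
    set A : Fin n → Fin n → ℝ := fun j i => ∑ k : Fin n,
      (if (j : ℕ) < r ∧ (i : ℕ) < r then 2 * c i j k * ψ i t * ψ j t * ψ k t else 0)
      with hA
    have hAanti : ∀ j i, A j i = - A i j := by
      intro j i
      rw [hA]
      simp only
      rw [← Finset.sum_neg_distrib]
      refine Finset.sum_congr rfl fun k _ => ?_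
      by_cases hj : (j : ℕ) < r
      · by_cases hi : (i : ℕ) < r
        · rw [if_pos ⟨hj, hi⟩, if_pos ⟨hi, hj⟩, hskew i j k]; ring
        · rw [if_neg (fun hc => hi hc.2), if_neg (fun hc => hi hc.1)]; ring
      · rw [if_neg (fun hc => hj hc.1), if_neg (fun hc => hj hc.2)]; ring
    have : (∑ j : Fin n, ∑ i : Fin n, A j i) = - ∑ j : Fin n, ∑ i : Fin n, A j i := by
      nth_rewrite 1 [Finset.sum_comm]
      rw [← Finset.sum_neg_distrib]
      refine Finset.sum_congr rfl fun i _ => ?_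
      rw [← Finset.sum_neg_distrib]
      exact Finset.sum_congr rfl fun j _ => hAanti j i
    linarith [this]
  -- g is constant
  have hconst : ∀ t : ℝ, g t = g 0 := by
    intro t
    have hdiff : Differentiable ℝ g := fun x => by
      simpa using (hderiv x).differentiableAt
    have hd0 : ∀ x, deriv g x = 0 := fun x => by
      rw [(hderiv x).deriv]; exact hzero x
    exact is_const_of_deriv_eq_zero hdiff hd0 t 0
  -- relate g to the norm
  have hng : ∀ t : ℝ, ‖u t‖ = Real.sqrt (g t) := by
    intro t
    rw [EuclideanSpace.norm_eq]
    congr 1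
    refine Finset.sum_congr rfl fun i _ => ?_
    rw [hu t i, Real.norm_eq_abs, sq_abs]
  intro t
  have h0 : g 0 = 1 := by
    have := hng 0
    rw [hnorm0] at this
    have hnn : 0 ≤ g 0 := Finset.sum_nonneg fun i _ => sq_nonneg _
    nlinarith [Real.sq_sqrt hnn, this]
  rw [hng t, hconst t, h0, Real.sqrt_one]
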